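/- Let Z be a compact metric space and ρ₁, ρ₂ antipodal diameter-one metrics on Z with a continuous positive derivative function λ = dρ₂/dρ₁ satisfying ρ₂(ξ,η)² = λ(ξ)λ(η)ρ₁(ξ,η)² for all ξ,η. If λ attains its maximum at ξ ∈ Z and η ∈ Z satisfies ρ₁(ξ,η) = 1, then λ attains its minimum at η and ρ₂(ξ,η) = 1. -/
import Mathlib


open Set Filter Topology

/-- An antipodal metric of diameter one on a topological space `Z`. -/
structure IsAntipodalMetric {Z : Type*} [TopologicalSpace Z] (ρ : Z → Z → ℝ) : Prop where
  symm : ∀ ξ η, ρ ξ η = ρ η ξ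
  eq_zero_iff : ∀ ξ η, ρ ξ η = 0 ↔ ξ = η
  nonneg : ∀ ξ η, 0 ≤ ρ ξ η
  triangle : ∀ ξ η ζ, ρ ξ ζ ≤ ρ ξ η + ρ η ζ
  continuous : Continuous fun p : Z × Z => ρ p.1 p.2
  le_one : ∀ ξ η, ρ ξ η ≤ 1
  antipodal : ∀ ξ, ∃ η, ρ ξ η = 1

/-- if the derivative `λ = dρ₂/dρ₁` attains its maximum at `ξ` and
`ρ₁(ξ,η) = 1`, then `λ` attains its minimum at `η` and `ρ₂(ξ,η) = 1`. -/
theorem min_at_antipode {Z : Type*} [MetricSpace Z] [CompactSpace Z]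
    (ρ₁ ρ₂ : Z → Z → ℝ)
    (h₁ : IsAntipodalMetric ρ₁) (h₂ : IsAntipodalMetric ρ₂)
    (lam : Z → ℝ) (hlamcont : Continuous lam) (hlampos : ∀ ξ, 0 < lam ξ)
    (hGMVT : ∀ ξ η, ρ₂ ξ η ^ 2 = lam ξ * lam η * ρ₁ ξ η ^ 2)
    (ξ η : Z) (hmax : IsMaxOn lam Set.univ ξ) (hξη : ρ₁ ξ η = 1) :
    IsMinOn lam Set.univ η ∧ ρ₂ ξ η = 1 := by
  obtain ⟨z0, -, hz0⟩ := IsCompact.exists_isMinOn isCompact_univ ⟨ξ, Set.mem_univ ξ⟩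
    hlamcont.continuousOn
  -- λ(z0) is the minimum value. First: lam z0 * lam ξ ≥ 1.
  obtain ⟨w, hw⟩ := h₂.antipodal z0
  have h1 : 1 ≤ lam z0 * lam w := by
    have h := hGMVT z0 w
    rw [hw] at h
    have hsq : ρ₁ z0 w ^ 2 ≤ 1 := by nlinarith [h₁.le_one z0 w, h₁.nonneg z0 w]
    nlinarith [mul_le_mul_of_nonneg_left hsq (le_of_lt (mul_pos (hlampos z0) (hlampos w)))]
  have hMm : 1 ≤ lam z0 * lam ξ := by
    have hwle : lam w ≤ lam ξ := hmax (Set.mem_univ w)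
    nlinarith [hlampos z0]
  -- Second: lam ξ * lam η ≤ 1.
  have h2 : lam ξ * lam η ≤ 1 := by
    have h := hGMVT ξ η
    rw [hξη] at h
    nlinarith [h₂.le_one ξ η, h₂.nonneg ξ η]
  have hηle : lam η ≤ lam z0 := by nlinarith [hlampos ξ]
  have hηeq : lam η = lam z0 := le_antisymm hηle (hz0 (Set.mem_univ η))
  have hprod : lam ξ * lam η = 1 := by
    rw [hηeq] at h2 ⊢
    linarith [mul_comm (lam ξ) (lam z0)]
  constructor
  · intro x _
    have := hz0 (Set.mem_univ x)
    simpa [hηeq] using this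
  · have h := hGMVT ξ η
    rw [hξη] at h
    nlinarith [h₂.nonneg ξ η]
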